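/- Let n be a natural number and let Ω₀ := Matrix.fromBlocks 0 1 (-1) 0 be the standard symplectic 2n×2n real matrix. The map sending a pair (X, Y) of real symmetric n×n matrices with Y positive definite (equivalently, a point Z = X + iY of the Siegel upper half space) to the 2n×2n real matrix J_Z := Matrix.fromBlocks (X * Y⁻¹) (-Y - X * Y⁻¹ * X) (Y⁻¹) (-(Y⁻¹ * X)) is a bijection onto the set of all real 2n×2n matrices J satisfying J * J = -1, Jᵀ * Ω₀ * J = Ω₀, and Ω₀ * J symmetric positive definite. -/

import Mathlib

open Matrix

lemma myPosDef_conj {m : Type*} [Fintype m] [DecidableEq m] {A : Matrix m m ℝ}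
    (hA : A.PosDef) (B : Matrix m m ℝ) (hB : IsUnit B) : (Bᵀ * A * B).PosDef := by
  have hBT : Bᴴ = Bᵀ := conjTranspose_eq_transpose_of_trivial B
  refine PosDef.of_dotProduct_mulVec_pos (hBT ▸ isHermitian_conjTranspose_mul_mul B hA.1) fun x hx => ?_
  have hx' : B *ᵥ x ≠ 0 := by
    intro h
    exact hx ((Matrix.mulVec_injective_iff_isUnit.mpr hB) (by simpa using h))
  simpa only [star_mulVec, dotProduct_mulVec, vecMul_vecMul, hBT, Matrix.mul_assoc]
    using hA.dotProduct_mulVec_pos hx'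

lemma myPosDef_blockDiag {m : Type*} [Fintype m] [DecidableEq m] {A D : Matrix m m ℝ}
    (hA : A.PosDef) (hD : D.PosDef) : (fromBlocks A 0 0 D).PosDef := by
  refine posDef_iff_dotProduct_mulVec.mpr ⟨?_, ?_⟩
  · rw [IsHermitian, fromBlocks_conjTranspose]
    simp [← conjTranspose_eq_transpose_of_trivial, hA.1.eq, hD.1.eq]
  · intro x hx
    rw [← Sum.elim_comp_inl_inr x, fromBlocks_mulVec, Function.star_sumElim,
      sumElim_dotProduct_sumElim]
    simp only [Matrix.zero_mulVec, add_zero, zero_add]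
    have hcases : x ∘ Sum.inl ≠ 0 ∨ x ∘ Sum.inr ≠ 0 := by
      by_contra h
      push_neg at h
      apply hx
      funext i
      cases i with
      | inl i => exact congrFun h.1 i
      | inr i => exact congrFun h.2 i
    rcases hcases with h | h
    · exact add_pos_of_pos_of_nonneg (hA.dotProduct_mulVec_pos h) (hD.posSemidef.dotProduct_mulVec_nonneg _)
    · exact add_pos_of_nonneg_of_pos (hA.posSemidef.dotProduct_mulVec_nonneg _) (hD.dotProduct_mulVec_pos h)

lemma myPosDef_toBlocks₁₁ {m o : Type*} [Fintype m] [Fintype o] {S : Matrix (m ⊕ o) (m ⊕ o) ℝ}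
    (hS : S.PosDef) : S.toBlocks₁₁.PosDef := by
  refine posDef_iff_dotProduct_mulVec.mpr ⟨?_, ?_⟩
  · ext i j
    have := congrFun (congrFun hS.1.eq (Sum.inl i)) (Sum.inl j)
    simpa [toBlocks₁₁, conjTranspose_apply] using this
  · intro x hx
    have hw : Sum.elim x (0 : o → ℝ) ≠ 0 := by
      intro h
      exact hx (funext fun i => congrFun h (Sum.inl i))
    have h2 := hS.dotProduct_mulVec_pos hw
    rw [show S = fromBlocks S.toBlocks₁₁ S.toBlocks₁₂ S.toBlocks₂₁ S.toBlocks₂₂ from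
      (fromBlocks_toBlocks S).symm, fromBlocks_mulVec, Function.star_sumElim,
      sumElim_dotProduct_sumElim] at h2
    simpa using h2

open Matrix

section
variable {m : Type*} [Fintype m] [DecidableEq m]

lemma myNegOne_fromBlocks :
    (-1 : Matrix (m ⊕ m) (m ⊕ m) ℝ) = fromBlocks (-1) 0 0 (-1) := by
  rw [← fromBlocks_one]
  ext (i | i) (j | j) <;> simp [fromBlocks]

end

theorem siegel_bijection_compatible_complex_structures (n : ℕ) :
    letI Ω₀ : Matrix (Fin n ⊕ Fin n) (Fin n ⊕ Fin n) ℝ := Matrix.fromBlocks 0 1 (-1) 0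
    Set.BijOn
      (fun p : Matrix (Fin n) (Fin n) ℝ × Matrix (Fin n) (Fin n) ℝ =>
        Matrix.fromBlocks (p.1 * p.2⁻¹) (-p.2 - p.1 * p.2⁻¹ * p.1) (p.2⁻¹) (-(p.2⁻¹ * p.1)))
      {p : Matrix (Fin n) (Fin n) ℝ × Matrix (Fin n) (Fin n) ℝ |
        p.1ᵀ = p.1 ∧ p.2ᵀ = p.2 ∧ p.2.PosDef}
      {J : Matrix (Fin n ⊕ Fin n) (Fin n ⊕ Fin n) ℝ |
        J * J = -1 ∧ Jᵀ * Ω₀ * J = Ω₀ ∧ (Ω₀ * J).IsSymm ∧ (Ω₀ * J).PosDef} := by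
  set Ω₀ : Matrix (Fin n ⊕ Fin n) (Fin n ⊕ Fin n) ℝ := Matrix.fromBlocks 0 1 (-1) 0
    with hΩconst
  refine ⟨?_, ?_, ?_⟩
  · -- MapsTo
    rintro ⟨X, Y⟩ ⟨hX, hY, hYpd⟩
    dsimp only at *
    letI := hYpd.isUnit.invertible
    have hYiT : (Y⁻¹)ᵀ = Y⁻¹ := by rw [transpose_nonsing_inv, hY]
    set J : Matrix (Fin n ⊕ Fin n) (Fin n ⊕ Fin n) ℝ :=
      fromBlocks (X * Y⁻¹) (-Y - X * Y⁻¹ * X) (Y⁻¹) (-(Y⁻¹ * X)) with hJ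
    have hYYi : Y * Y⁻¹ = 1 := Matrix.mul_inv_of_invertible Y
    have hYiY : Y⁻¹ * Y = 1 := Matrix.inv_mul_of_invertible Y
    have hJ2 : J * J = -1 := by
      rw [hJ, fromBlocks_multiply, myNegOne_fromBlocks, fromBlocks_inj]
      refine ⟨?_, ?_, ?_, ?_⟩
      · calc X * Y⁻¹ * (X * Y⁻¹) + (-Y - X * Y⁻¹ * X) * Y⁻¹
            = X * Y⁻¹ * (X * Y⁻¹) + (-(Y * Y⁻¹) - X * Y⁻¹ * (X * Y⁻¹)) := by noncomm_ring
          _ = -1 := by rw [hYYi]; noncomm_ring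
      · calc X * Y⁻¹ * (-Y - X * Y⁻¹ * X) + (-Y - X * Y⁻¹ * X) * -(Y⁻¹ * X)
            = -(X * (Y⁻¹ * Y)) + (Y * Y⁻¹) * X := by noncomm_ring
          _ = 0 := by rw [hYiY, hYYi]; noncomm_ring
      · noncomm_ring
      · calc Y⁻¹ * (-Y - X * Y⁻¹ * X) + -(Y⁻¹ * X) * -(Y⁻¹ * X)
            = -(Y⁻¹ * Y) - Y⁻¹ * X * Y⁻¹ * X + Y⁻¹ * X * Y⁻¹ * X := by noncomm_ring
          _ = -1 := by rw [hYiY]; noncomm_ring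
    have hOJ : Ω₀ * J = fromBlocks Y⁻¹ (-(Y⁻¹ * X)) (-(X * Y⁻¹)) (Y + X * Y⁻¹ * X) := by
      rw [hΩconst, hJ, fromBlocks_multiply, fromBlocks_inj]
      refine ⟨?_, ?_, ?_, ?_⟩ <;> noncomm_ring
    have hsym : (Ω₀ * J).IsSymm := by
      rw [Matrix.IsSymm, hOJ, fromBlocks_transpose, fromBlocks_inj]
      refine ⟨?_, ?_, ?_, ?_⟩
      · exact hYiT
      · rw [transpose_neg, transpose_mul, hYiT, hX]
      · rw [transpose_neg, transpose_mul, hYiT, hX]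
      · rw [transpose_add, hY, transpose_mul, transpose_mul, hYiT, hX]
        noncomm_ring
    have hΩT : Ω₀ᵀ = -Ω₀ := by
      rw [hΩconst, fromBlocks_transpose]
      ext (i | i) (j | j) <;> simp [fromBlocks]
    have hcompat : Jᵀ * Ω₀ * J = Ω₀ := by
      have h1 : Jᵀ * Ω₀ = -(Ω₀ * J) := by
        have := hsym.eq
        calc Jᵀ * Ω₀ = -(Jᵀ * Ω₀ᵀ) := by rw [hΩT]; noncomm_ring
          _ = -((Ω₀ * J)ᵀ) := by rw [transpose_mul]
          _ = -(Ω₀ * J) := by rw [hsym]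
      rw [h1]
      calc -(Ω₀ * J) * J = -(Ω₀ * (J * J)) := by noncomm_ring
        _ = Ω₀ := by rw [hJ2]; noncomm_ring
    have hpdef : (Ω₀ * J).PosDef := by
      have hP : IsUnit (fromBlocks 1 (-X) 0 1 : Matrix (Fin n ⊕ Fin n) (Fin n ⊕ Fin n) ℝ) := by
        rw [Matrix.isUnit_iff_isUnit_det, det_fromBlocks_zero₂₁]
        simp
      have hfact : Ω₀ * J =
          (fromBlocks 1 (-X) 0 1)ᵀ * fromBlocks Y⁻¹ 0 0 Y * fromBlocks 1 (-X) 0 1 := by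
        rw [hOJ, fromBlocks_transpose, fromBlocks_multiply, fromBlocks_multiply]
        rw [transpose_one, transpose_zero, transpose_neg, hX, fromBlocks_inj]
        refine ⟨?_, ?_, ?_, ?_⟩ <;> noncomm_ring
      rw [hfact]
      exact myPosDef_conj (myPosDef_blockDiag hYpd.inv hYpd) _ hP
    exact ⟨hJ2, hcompat, hsym, hpdef⟩
  · -- InjOn
    rintro ⟨X₁, Y₁⟩ ⟨hX₁, hY₁, hY₁pd⟩ ⟨X₂, Y₂⟩ ⟨hX₂, hY₂, hY₂pd⟩ heq
    dsimp only at heq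
    letI := hY₁pd.isUnit.invertible
    letI := hY₂pd.isUnit.invertible
    rw [← fromBlocks_toBlocks (fromBlocks _ _ _ _)] at heq
    have h21 : Y₁⁻¹ = Y₂⁻¹ := by
      have := congrArg Matrix.toBlocks₂₁ heq
      simpa [toBlocks_fromBlocks₂₁] using this
    have h11 : X₁ * Y₁⁻¹ = X₂ * Y₂⁻¹ := by
      have := congrArg Matrix.toBlocks₁₁ heq
      simpa [toBlocks_fromBlocks₁₁] using this
    have hY : Y₁ = Y₂ := by
      have := congrArg (·⁻¹) h21
      simpa [Matrix.inv_inv_of_invertible] using this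
    have hXeq : X₁ = X₂ := by
      have h := congrArg (· * Y₂) h11
      simpa [hY, Matrix.mul_assoc, Matrix.inv_mul_of_invertible] using h
    exact Prod.ext hXeq hY
  · -- SurjOn
    rintro J ⟨hJ2, hcompat, hsym, hpd⟩
    set A := J.toBlocks₁₁ with hA
    set B := J.toBlocks₁₂ with hB
    set C := J.toBlocks₂₁ with hC
    set D := J.toBlocks₂₂ with hD
    have hJB : J = fromBlocks A B C D := (fromBlocks_toBlocks J).symm
    have hOJ : Ω₀ * J = fromBlocks C D (-A) (-B) := by
      rw [hΩconst, hJB, fromBlocks_multiply, fromBlocks_inj]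
      refine ⟨?_, ?_, ?_, ?_⟩ <;> noncomm_ring
    have hCpd : C.PosDef := by
      have := hpd
      rw [hOJ] at this
      simpa [toBlocks_fromBlocks₁₁] using myPosDef_toBlocks₁₁ this
    letI := hCpd.isUnit.invertible
    -- symmetry facts
    have hsymB : (fromBlocks C D (-A) (-B))ᵀ = fromBlocks C D (-A) (-B) := by
      rw [← hOJ]; exact hsym
    rw [fromBlocks_transpose, fromBlocks_inj] at hsymB
    obtain ⟨hCT, hDA, -, -⟩ := hsymB
    -- hDA : (-A)ᵀ = D
    have hDval : D = -Aᵀ := by rw [← hDA, transpose_neg]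
    -- J² = -1 block equations
    have hJ2B : fromBlocks (A * A + B * C) (A * B + B * D) (C * A + D * C) (C * B + D * D)
        = fromBlocks (-1) 0 0 (-1) := by
      rw [← fromBlocks_multiply, ← hJB, hJ2, myNegOne_fromBlocks]
    rw [fromBlocks_inj] at hJ2B
    obtain ⟨e1, -, e3, -⟩ := hJ2B
    have hCA : C * A = Aᵀ * C := by
      rw [hDval] at e3
      rwa [neg_mul, add_neg_eq_zero] at e3
    have hACi : C⁻¹ * Aᵀ = A * C⁻¹ := by
      have h := congrArg (fun M => C⁻¹ * M * C⁻¹) hCA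
      rw [← Matrix.mul_assoc, ← Matrix.mul_assoc, Matrix.inv_mul_of_invertible,
        Matrix.one_mul] at h
      rw [Matrix.mul_assoc (C⁻¹ * Aᵀ), Matrix.mul_inv_of_invertible, Matrix.mul_one] at h
      exact h.symm
    refine ⟨(A * C⁻¹, C⁻¹), ⟨?_, ?_, hCpd.inv⟩, ?_⟩
    · dsimp only
      rw [transpose_mul, transpose_nonsing_inv, hCT, hACi]
    · dsimp only
      rw [transpose_nonsing_inv, hCT]
    · dsimp only
      have hYinv : (C⁻¹)⁻¹ = C := Matrix.inv_inv_of_invertible C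
      have hAC : A * C⁻¹ * C = A := by
        rw [Matrix.mul_assoc, Matrix.inv_mul_of_invertible, Matrix.mul_one]
      rw [hJB, hYinv, fromBlocks_inj]
      refine ⟨hAC, ?_, rfl, ?_⟩
      · have hBval : B = -C⁻¹ - A * A * C⁻¹ := by
          have h := congrArg (fun M => M * C⁻¹) e1
          rw [Matrix.add_mul, Matrix.mul_assoc B, Matrix.mul_inv_of_invertible,
            Matrix.mul_one, Matrix.neg_mul, Matrix.one_mul] at h
          linear_combination (norm := noncomm_ring) h
        rw [hBval, hAC]
        noncomm_ring
      · rw [← Matrix.mul_assoc, hCA, Matrix.mul_assoc,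
          Matrix.mul_inv_of_invertible, Matrix.mul_one, hDval]
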